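/- Let p = (a,b) ∈ ℤ² with gcd(a,b) = 1 (so the segment from the origin o to p is prime), and suppose p is none of (1,0), (−1,0), (0,1), (0,−1). Then there exists q = (a',b') ∈ ℤ² such that: |a·b' − b·a'| = 1 (so the triangles conv{o,p,q} and conv{o,p,p−q} are minimum triangles, and the segments [o,q] and [o,p−q] are prime), the Euclidean length of [o,q] is strictly less than that of [o,p], and the Euclidean length of [o,p−q] is strictly less than that of [o,p]. -/
import Mathlib

private lemma aux_short (a b a' b' N d : ℤ) (hN : 2 ≤ N) (hNdef : N = a ^ 2 + b ^ 2)
    (hdet : a * b' - b * a' = 1) (hdot : a * a' + b * b' = d)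
    (hd0 : 0 ≤ d) (hdN : d < N) :
    a' ^ 2 + b' ^ 2 < a ^ 2 + b ^ 2 ∧ (a - a') ^ 2 + (b - b') ^ 2 < a ^ 2 + b ^ 2 := by
  have hid : N * (a' ^ 2 + b' ^ 2) = d ^ 2 + 1 := by
    linear_combination (a' ^ 2 + b' ^ 2) * hNdef + (a * a' + b * b' + d) * hdot +
      (a * b' - b * a' + 1) * hdet
  have hdne : d ≠ 0 := by
    intro h0
    rw [h0] at hid
    have hdvd : N ∣ 1 := ⟨a' ^ 2 + b' ^ 2, by linarith⟩
    have := Int.le_of_dvd one_pos hdvd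
    omega
  have hd1 : 1 ≤ d := by omega
  have hdot2 : a * (a - a') + b * (b - b') = N - d := by
    linear_combination -hNdef - hdot
  have hdet2 : a * (b - b') - b * (a - a') = -1 := by linear_combination -hdet
  have hid2 : N * ((a - a') ^ 2 + (b - b') ^ 2) = (N - d) ^ 2 + 1 := by
    linear_combination ((a - a') ^ 2 + (b - b') ^ 2) * hNdef +
      (a * (a - a') + b * (b - b') + (N - d)) * hdot2 +
      (a * (b - b') - b * (a - a') + (-1)) * hdet2
  constructor
  · have h1 : N * (a' ^ 2 + b' ^ 2) < N * N := by nlinarith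
    have := lt_of_mul_lt_mul_left h1 (by omega : (0 : ℤ) ≤ N)
    linarith [hNdef ▸ this]
  · have h1 : N * ((a - a') ^ 2 + (b - b') ^ 2) < N * N := by nlinarith
    have := lt_of_mul_lt_mul_left h1 (by omega : (0 : ℤ) ≤ N)
    linarith [hNdef ▸ this]

/-- For a prime segment from the origin to `p = (a,b) ∈ ℤ²`
(`gcd(a,b) = 1`) with `p` none of `(±1,0)`, `(0,±1)`, there exists `q = (a',b') ∈ ℤ²`
with `|a·b' − b·a'| = 1` such that both `[o,q]` and `[o,p−q]` are strictly shorter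
(in Euclidean length) than `[o,p]`. -/
theorem exists_shorter_prime_segment (a b : ℤ) (hgcd : Int.gcd a b = 1)
    (h₁ : (a, b) ≠ ((1 : ℤ), (0 : ℤ))) (h₂ : (a, b) ≠ ((-1 : ℤ), (0 : ℤ)))
    (h₃ : (a, b) ≠ ((0 : ℤ), (1 : ℤ))) (h₄ : (a, b) ≠ ((0 : ℤ), (-1 : ℤ))) :
    ∃ a' b' : ℤ, |a * b' - b * a'| = 1 ∧
      Real.sqrt ((a' : ℝ) ^ 2 + (b' : ℝ) ^ 2) < Real.sqrt ((a : ℝ) ^ 2 + (b : ℝ) ^ 2) ∧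
      Real.sqrt (((a - a' : ℤ) : ℝ) ^ 2 + ((b - b' : ℤ) : ℝ) ^ 2) <
        Real.sqrt ((a : ℝ) ^ 2 + (b : ℝ) ^ 2) := by
  obtain ⟨u, v, huv⟩ := Int.isCoprime_iff_gcd_eq_one.mpr hgcd
  have hdet0 : a * u - b * (-v) = 1 := by linarith
  have hN2 : 2 ≤ a ^ 2 + b ^ 2 := by
    rcases lt_or_ge (a ^ 2 + b ^ 2) 2 with h | h
    · exfalso
      have ha1 : -1 ≤ a := by nlinarith [sq_nonneg a, sq_nonneg b]
      have ha2 : a ≤ 1 := by nlinarith [sq_nonneg a, sq_nonneg b]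
      have hb1 : -1 ≤ b := by nlinarith [sq_nonneg a, sq_nonneg b]
      have hb2 : b ≤ 1 := by nlinarith [sq_nonneg a, sq_nonneg b]
      have hpne1 : ¬(a = 1 ∧ b = 0) := by rintro ⟨h1, h2⟩; exact h₁ (by simp [h1, h2])
      have hpne2 : ¬(a = -1 ∧ b = 0) := by rintro ⟨h1, h2⟩; exact h₂ (by simp [h1, h2])
      have hpne3 : ¬(a = 0 ∧ b = 1) := by rintro ⟨h1, h2⟩; exact h₃ (by simp [h1, h2])
      have hpne4 : ¬(a = 0 ∧ b = -1) := by rintro ⟨h1, h2⟩; exact h₄ (by simp [h1, h2])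
      interval_cases a <;> interval_cases b <;> simp_all [Int.gcd]
    · exact h
  set N : ℤ := a ^ 2 + b ^ 2 with hNdef
  have hNpos : (0 : ℤ) < N := by omega
  set c : ℤ := a * (-v) + b * u with hcdef
  set m : ℤ := c % N with hmdef
  have hm0 : 0 ≤ m := Int.emod_nonneg c (by omega)
  have hmN : m < N := Int.emod_lt_of_pos c hNpos
  set t : ℤ := c / N with htdef
  have hdm : N * t + m = c := Int.mul_ediv_add_emod c N
  set a' : ℤ := -v - t * a with ha'def
  set b' : ℤ := u - t * b with hb'def
  have hdet : a * b' - b * a' = 1 := by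
    rw [ha'def, hb'def]; ring_nf; linarith [hdet0]
  have hdot : a * a' + b * b' = m := by
    rw [ha'def, hb'def, hmdef]
    linear_combination -hdm - hcdef + t * hNdef
  obtain ⟨hq1, hq2⟩ := aux_short a b a' b' N m hN2 hNdef hdet hdot hm0 hmN
  refine ⟨a', b', by rw [hdet]; exact abs_one, ?_, ?_⟩
  · rw [Real.sqrt_lt_sqrt_iff (by positivity)]
    exact_mod_cast hq1
  · rw [Real.sqrt_lt_sqrt_iff (by positivity)]
    push_cast
    exact_mod_cast hq2
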